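/- For any real c and ρ > 0, J_{m,n}(z,ρ) is an eigenfunction of the operator (1+ic) z ∂/∂z + (1−ic) \bar{z} ∂/∂\bar{z} − 2ρ ∂²/(∂z∂\bar{z}) with eigenvalue m + n + i(m−n)c; that is, [(1+ic) z ∂_z + (1−ic) \bar{z} ∂_{\bar{z}} − 2ρ ∂_z ∂_{\bar{z}}] J_{m,n}(z,ρ) = [m+n+i(m−n)c] J_{m,n}(z,ρ). -/

import Mathlib

open Finset

/-- The complex Hermite polynomial `J_{m,n}` in the two independent variables `z` and `w`
(the latter playing the role of `z̄`), with parameter `ρ`. -/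
noncomputable def hermiteJ2 (m n : ℕ) (z w : ℂ) (ρ : ℝ) : ℂ :=
  ∑ r ∈ Finset.range (min m n + 1),
    (-1 : ℂ) ^ r * (r.factorial : ℂ) * (m.choose r : ℂ) * (n.choose r : ℂ) *
      z ^ (m - r) * w ^ (n - r) * (ρ : ℂ) ^ r

lemma pow_aux (k : ℕ) (z : ℂ) : (k : ℂ) * (z * z ^ (k - 1)) = (k : ℂ) * z ^ k := by
  cases k with
  | zero => simp
  | succ k => rw [Nat.succ_sub_one]; ring

lemma natkey (m n r : ℕ) :
    (r+1) * (r+1).factorial * m.choose (r+1) * n.choose (r+1)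
      = r.factorial * (m.choose r * (m - r)) * (n.choose r * (n - r)) := by
  have h1 := Nat.choose_succ_right_eq m r
  have h2 := Nat.choose_succ_right_eq n r
  calc (r+1) * (r+1).factorial * m.choose (r+1) * n.choose (r+1)
      = r.factorial * (m.choose (r+1) * (r+1)) * (n.choose (r+1) * (r+1)) := by
        rw [Nat.factorial_succ]; ring
    _ = _ := by rw [h1, h2]

lemma hS3 (m n : ℕ) (ρ : ℝ) (z w : ℂ) :
    ∑ r ∈ range (min m n + 1), 2 * (ρ:ℂ) *
        ((-1:ℂ)^r * (r.factorial:ℂ) * (m.choose r:ℂ) * (n.choose r:ℂ) *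
          (((m - r : ℕ) : ℂ) * z ^ (m - r - 1)) * (((n - r : ℕ) : ℂ) * w ^ (n - r - 1)) * (ρ:ℂ) ^ r)
    = ∑ r ∈ range (min m n + 1),
        -((2 * (r:ℂ)) * ((-1:ℂ)^r * (r.factorial:ℂ) * (m.choose r:ℂ) * (n.choose r:ℂ) *
          z ^ (m - r) * w ^ (n - r) * (ρ:ℂ) ^ r)) := by
  rw [Finset.sum_range_succ, Finset.sum_range_succ']
  have hz : (m - min m n) * (n - min m n) = 0 := by
    rcases le_total m n with h | h
    · simp [min_eq_left h]
    · simp [min_eq_right h]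
  have hz' : ((m - min m n : ℕ) : ℂ) * ((n - min m n : ℕ) : ℂ) = 0 := by
    rw [← Nat.cast_mul, hz, Nat.cast_zero]
  have hlast : 2 * (ρ:ℂ) *
        ((-1:ℂ)^(min m n) * ((min m n).factorial:ℂ) * (m.choose (min m n):ℂ) * (n.choose (min m n):ℂ) *
          (((m - min m n : ℕ) : ℂ) * z ^ (m - min m n - 1)) * (((n - min m n : ℕ) : ℂ) * w ^ (n - min m n - 1)) * (ρ:ℂ) ^ (min m n)) = 0 := by
    linear_combination (2 * (ρ:ℂ) * (-1:ℂ)^(min m n) * ((min m n).factorial:ℂ) * (m.choose (min m n):ℂ) * (n.choose (min m n):ℂ) *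
      z ^ (m - min m n - 1) * w ^ (n - min m n - 1) * (ρ:ℂ) ^ (min m n)) * hz'
  rw [hlast]
  simp only [Nat.cast_zero, mul_zero, zero_mul, neg_zero, add_zero]
  refine Finset.sum_congr rfl fun r _ => ?_
  have key := congrArg (Nat.cast : ℕ → ℂ) (natkey m n r)
  push_cast at key
  rw [← Nat.sub_sub m r 1, ← Nat.sub_sub n r 1]
  push_cast
  linear_combination (-2 * (-1:ℂ)^r * z ^ (m - r - 1) * w ^ (n - r - 1) * (ρ:ℂ)^(r+1)) * key

lemma hermiteJ2_deriv_z (m n : ℕ) (w : ℂ) (ρ : ℝ) (z : ℂ) :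
    deriv (fun z' => hermiteJ2 m n z' w ρ) z
    = ∑ r ∈ range (min m n + 1),
        (-1:ℂ)^r * (r.factorial:ℂ) * (m.choose r:ℂ) * (n.choose r:ℂ) *
          (((m - r : ℕ) : ℂ) * z ^ (m - r - 1)) * w ^ (n - r) * (ρ:ℂ) ^ r := by
  unfold hermiteJ2
  rw [deriv_fun_sum (fun r _ => by fun_prop)]
  refine Finset.sum_congr rfl fun r _ => ?_
  have h : (fun z' : ℂ => (-1:ℂ)^r * (r.factorial:ℂ) * (m.choose r:ℂ) * (n.choose r:ℂ) * z' ^ (m-r) * w ^ (n-r) * (ρ:ℂ)^r)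
      = fun z' => ((-1:ℂ)^r * (r.factorial:ℂ) * (m.choose r:ℂ) * (n.choose r:ℂ) * w ^ (n-r) * (ρ:ℂ)^r) * z' ^ (m-r) := by
    ext z'; ring
  rw [h, deriv_const_mul _ (differentiable_pow _).differentiableAt, deriv_pow_field]; ring

lemma hermiteJ2_deriv_w (m n : ℕ) (z : ℂ) (ρ : ℝ) (w : ℂ) :
    deriv (fun w' => hermiteJ2 m n z w' ρ) w
    = ∑ r ∈ range (min m n + 1),
        (-1:ℂ)^r * (r.factorial:ℂ) * (m.choose r:ℂ) * (n.choose r:ℂ) *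
          z ^ (m - r) * (((n - r : ℕ) : ℂ) * w ^ (n - r - 1)) * (ρ:ℂ) ^ r := by
  unfold hermiteJ2
  rw [deriv_fun_sum (fun r _ => by fun_prop)]
  refine Finset.sum_congr rfl fun r _ => ?_
  have h : (fun w' : ℂ => (-1:ℂ)^r * (r.factorial:ℂ) * (m.choose r:ℂ) * (n.choose r:ℂ) * z ^ (m-r) * w' ^ (n-r) * (ρ:ℂ)^r)
      = fun w' => ((-1:ℂ)^r * (r.factorial:ℂ) * (m.choose r:ℂ) * (n.choose r:ℂ) * z ^ (m-r) * (ρ:ℂ)^r) * w' ^ (n-r) := by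
    ext w'; ring
  rw [h, deriv_const_mul _ (differentiable_pow _).differentiableAt, deriv_pow_field]; ring

lemma hermiteJ2_deriv_zw (m n : ℕ) (ρ : ℝ) (z w : ℂ) :
    deriv (fun z' => deriv (fun w' => hermiteJ2 m n z' w' ρ) w) z
    = ∑ r ∈ range (min m n + 1),
        (-1:ℂ)^r * (r.factorial:ℂ) * (m.choose r:ℂ) * (n.choose r:ℂ) *
          (((m - r : ℕ) : ℂ) * z ^ (m - r - 1)) * (((n - r : ℕ) : ℂ) * w ^ (n - r - 1)) * (ρ:ℂ) ^ r := by
  have h : (fun z' => deriv (fun w' => hermiteJ2 m n z' w' ρ) w)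
      = fun z' => ∑ r ∈ range (min m n + 1),
        (-1:ℂ)^r * (r.factorial:ℂ) * (m.choose r:ℂ) * (n.choose r:ℂ) *
          z' ^ (m - r) * (((n - r : ℕ) : ℂ) * w ^ (n - r - 1)) * (ρ:ℂ) ^ r := by
    ext z'; exact hermiteJ2_deriv_w m n z' ρ w
  rw [h, deriv_fun_sum (fun r _ => by fun_prop)]
  refine Finset.sum_congr rfl fun r _ => ?_
  have h2 : (fun z' : ℂ => (-1:ℂ)^r * (r.factorial:ℂ) * (m.choose r:ℂ) * (n.choose r:ℂ) * z' ^ (m-r) * (((n - r : ℕ) : ℂ) * w ^ (n - r - 1)) * (ρ:ℂ)^r)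
      = fun z' => ((-1:ℂ)^r * (r.factorial:ℂ) * (m.choose r:ℂ) * (n.choose r:ℂ) * (((n - r : ℕ) : ℂ) * w ^ (n - r - 1)) * (ρ:ℂ)^r) * z' ^ (m-r) := by
    ext z'; ring
  rw [h2, deriv_const_mul _ (differentiable_pow _).differentiableAt, deriv_pow_field]; ring


/-- `J_{m,n}(·,ρ)` is an eigenfunction of
`(1+ic) z ∂_z + (1−ic) z̄ ∂_{z̄} − 2ρ ∂_z ∂_{z̄}` with eigenvalue `m + n + i(m−n)c`. -/
theorem hermiteJ2_eigenfunction (m n : ℕ) (c : ℝ) (ρ : ℝ) (hρ : 0 < ρ) (z w : ℂ) :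
    (1 + Complex.I * c) * z * deriv (fun z' => hermiteJ2 m n z' w ρ) z
      + (1 - Complex.I * c) * w * deriv (fun w' => hermiteJ2 m n z w' ρ) w
      - 2 * (ρ : ℂ) * deriv (fun z' => deriv (fun w' => hermiteJ2 m n z' w' ρ) w) z
    = ((m : ℂ) + (n : ℂ) + Complex.I * ((m : ℂ) - (n : ℂ)) * c) * hermiteJ2 m n z w ρ := by
  rw [hermiteJ2_deriv_z, hermiteJ2_deriv_w, hermiteJ2_deriv_zw]
  unfold hermiteJ2
  rw [Finset.mul_sum, Finset.mul_sum, Finset.mul_sum, hS3, Finset.mul_sum,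
    ← Finset.sum_add_distrib, ← Finset.sum_sub_distrib]
  refine Finset.sum_congr rfl fun r hr => ?_
  have hr' : r ≤ min m n := Nat.lt_succ_iff.mp (Finset.mem_range.mp hr)
  have hm : r ≤ m := hr'.trans (min_le_left m n)
  have hn : r ≤ n := hr'.trans (min_le_right m n)
  have hz := pow_aux (m - r) z
  have hw := pow_aux (n - r) w
  rw [Nat.cast_sub hm] at hz ⊢
  rw [Nat.cast_sub hn] at hw ⊢
  linear_combination ((1 + Complex.I * c) * ((-1:ℂ)^r * (r.factorial:ℂ) * (m.choose r:ℂ) * (n.choose r:ℂ)) * w ^ (n - r) * (ρ:ℂ)^r) * hz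
    + ((1 - Complex.I * c) * ((-1:ℂ)^r * (r.factorial:ℂ) * (m.choose r:ℂ) * (n.choose r:ℂ)) * z ^ (m - r) * (ρ:ℂ)^r) * hw
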